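/- Let H ⊆ R^n be a hyperplane (an (n-1)-dimensional linear subspace) and λ : H → C(n) a real-linear map. Then there exists a real-linear extension Λ : R^n → C(n) of λ with D_L Λ := ∑_j e_j Λ(u_j) = 0. -/

import Mathlib

noncomputable def Qneg (n : ℕ) : QuadraticForm ℝ (Fin n → ℝ) :=
  QuadraticMap.weightedSumSquares ℝ (fun _ : Fin n => (-1 : ℝ))

lemma pi_eq_sum_smul_single {n : ℕ} (f : Fin n → ℝ) :
    f = ∑ j, f j • (Pi.single j 1 : Fin n → ℝ) := by
  conv_lhs => rw [← Finset.univ_sum_single f]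
  refine Finset.sum_congr rfl fun j _ => ?_
  rw [← Pi.single_smul, smul_eq_mul, mul_one]

/-- Any linear map `λ` from a hyperplane `H ⊆ ℝⁿ` to `C(n)` extends to a linear map
`Λ : ℝⁿ → C(n)` with `D_L Λ = ∑ⱼ eⱼ Λ(uⱼ) = 0`. -/
theorem exists_linear_extension_diracL_zero {n : ℕ}
    (H : Submodule ℝ (Fin n → ℝ)) (hH : Module.finrank ℝ H = n - 1)
    (lam : H →ₗ[ℝ] CliffordAlgebra (Qneg n)) :
    ∃ Λ : (Fin n → ℝ) →ₗ[ℝ] CliffordAlgebra (Qneg n),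
      (∀ v : H, Λ v = lam v) ∧
        ∑ j, CliffordAlgebra.ι (Qneg n) (Pi.single j 1) * Λ (Pi.single j 1) = 0 := by
  rcases Nat.eq_zero_or_pos n with hn | hn
  · subst hn
    refine ⟨0, ?_, by simp⟩
    intro v
    have hv : v = 0 := Subsingleton.elim v 0
    simp [hv]
  · -- main case
    have hfr : Module.finrank ℝ (Fin n → ℝ) = n := by simp
    have hHne : H ≠ ⊤ := by
      intro h
      rw [h, finrank_top, hfr] at hH
      omega
    obtain ⟨w, -, hwH⟩ := SetLike.exists_of_lt (show H < ⊤ from lt_top_iff_ne_top.mpr hHne)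
    have hw0 : w ≠ 0 := fun h => hwH (h ▸ H.zero_mem)
    set K : Submodule ℝ (Fin n → ℝ) := Submodule.span ℝ {w} with hK
    have hdis : Disjoint H K := (Submodule.disjoint_span_singleton' hw0).mpr hwH
    have hKfr : Module.finrank ℝ K = 1 := finrank_span_singleton hw0
    have hsup : H ⊔ K = ⊤ := by
      apply Submodule.eq_top_of_finrank_eq
      have h1 := Submodule.finrank_sup_add_finrank_inf_eq H K
      rw [hdis.eq_bot, finrank_bot, add_zero, hH, hKfr] at h1
      rw [hfr]
      omega
    have hcompl : IsCompl H K := ⟨hdis, codisjoint_iff.mpr hsup⟩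
    set p := Submodule.projectionOnto H K hcompl with hp
    set q := Submodule.linearProjOfIsCompl K H hcompl.symm with hq
    set π : (Fin n → ℝ) →ₗ[ℝ] ℝ :=
      ((LinearEquiv.toSpanNonzeroSingleton ℝ (Fin n → ℝ) w hw0).symm.toLinearMap).comp q with hπ
    have hqw : q w = ⟨w, Submodule.mem_span_singleton_self w⟩ :=
      Submodule.linearProjOfIsCompl_apply_left hcompl.symm ⟨w, Submodule.mem_span_singleton_self w⟩
    have hπw : π w ≠ 0 := by
      intro h
      rw [hπ] at h
      simp only [LinearMap.comp_apply, LinearEquiv.coe_coe] at h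
      have := (LinearEquiv.toSpanNonzeroSingleton ℝ (Fin n → ℝ) w hw0).symm.map_eq_zero_iff.mp h
      rw [hqw] at this
      exact hw0 (by simpa using congrArg Subtype.val this)
    have hπH : ∀ v ∈ H, π v = 0 := by
      intro v hv
      have : q v = 0 := Submodule.linearProjOfIsCompl_apply_right hcompl.symm ⟨v, hv⟩
      simp [hπ, this]
    set c : Fin n → ℝ := fun j => π (Pi.single j 1) with hc
    have hcn : c ≠ 0 := by
      intro h
      apply hπw
      rw [pi_eq_sum_smul_single w, map_sum]
      refine Finset.sum_eq_zero fun j _ => ?_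
      rw [map_smul]
      have h0 : π (Pi.single j 1) = 0 := congrFun h j
      simp [h0]
    have hQc : Qneg n c ≠ 0 := by
      intro h
      apply hcn
      have hQ : Qneg n c = ∑ j, (-1 : ℝ) • (c j * c j) :=
        QuadraticMap.weightedSumSquares_apply _ c
      rw [hQ] at h
      simp only [neg_smul, one_smul, Finset.sum_neg_distrib, neg_eq_zero] at h
      have hz := (Finset.sum_eq_zero_iff_of_nonneg
        (fun j _ => mul_self_nonneg (c j))).mp h
      funext j
      exact mul_self_eq_zero.mp (hz j (Finset.mem_univ j))
    set S : CliffordAlgebra (Qneg n) :=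
      ∑ j, CliffordAlgebra.ι (Qneg n) (Pi.single j 1) * lam (p (Pi.single j 1)) with hS
    set a : CliffordAlgebra (Qneg n) :=
      (Qneg n c)⁻¹ • (CliffordAlgebra.ι (Qneg n) c * (-S)) with ha
    refine ⟨lam.comp p + π.smulRight a, ?_, ?_⟩
    · intro v
      simp only [LinearMap.add_apply, LinearMap.comp_apply, LinearMap.smulRight_apply]
      rw [Submodule.projectionOnto_apply_left hcompl v, hπH v v.2, zero_smul, add_zero]
    · have hιc : CliffordAlgebra.ι (Qneg n) c
          = ∑ j, c j • CliffordAlgebra.ι (Qneg n) (Pi.single j 1) := by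
        conv_lhs => rw [pi_eq_sum_smul_single c]
        rw [map_sum]
        exact Finset.sum_congr rfl fun j _ => map_smul _ _ _
      have key : ∑ j, CliffordAlgebra.ι (Qneg n) (Pi.single j 1) *
          ((lam.comp p + π.smulRight a) (Pi.single j 1))
          = S + CliffordAlgebra.ι (Qneg n) c * a := by
        simp only [LinearMap.add_apply, LinearMap.comp_apply, LinearMap.smulRight_apply,
          mul_add]
        rw [Finset.sum_add_distrib, hS]
        congr 1
        rw [hιc, Finset.sum_mul]
        exact Finset.sum_congr rfl fun j _ => by
          rw [mul_smul_comm, smul_mul_assoc]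
      rw [key, ha, mul_smul_comm, ← mul_assoc, CliffordAlgebra.ι_sq_scalar,
        Algebra.smul_def, ← mul_assoc, ← map_mul, inv_mul_cancel₀ hQc, map_one, one_mul,
        add_neg_cancel]
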